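/- Preglid FR is a cotilting torsion-free class in Mod oFF_Λ R, and Prefrag FR is a cotilting torsion-free class in Mod FF_Λ R. That is, each of these full subcategories is closed under subobjects and under extensions in the ambient abelian category, the inclusion functor admits a left adjoint, and every object of the ambient module category admits an epimorphism from an object of the subcategory. -/

import Mathlib

set_option linter.unusedSectionVars false
set_option maxHeartbeats 1000000
set_option synthInstance.maxHeartbeats 1000000
set_option maxHeartbeats 2000000

noncomputable section

open CategoryTheory CategoryTheory.Limits

universe u

namespace GliderPaper

/-- A `Γ`-filtration `FR` on a unital ring `R`: additive subgroups `F γ` with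
`1 ∈ F 1`, monotone in `γ`, and multiplicative. -/
structure RingFiltration (Γ : Type u) [Group Γ] [PartialOrder Γ] (R : Type u) [Ring R] where
  F : Γ → AddSubgroup R
  one_mem : (1 : R) ∈ F 1
  mono : ∀ {α β : Γ}, α ≤ β → F α ≤ F β
  mul_mem : ∀ {α β : Γ} {a b : R}, a ∈ F α → b ∈ F β → a * b ∈ F (α * β)

variable {Γ : Type u} [Group Γ] [PartialOrder Γ]
  [CovariantClass Γ Γ (· * ·) (· ≤ ·)] [CovariantClass Γ Γ (Function.swap (· * ·)) (· ≤ ·)]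
  {R : Type u} [Ring R]

/-- Objects of the extended filtered companion category `oFF_Λ R`:
the disjoint union `Λ ⊔ {∞}`. -/
inductive OFF (FR : RingFiltration Γ R) (Λ : Set Γ) : Type u
  | of (α : Λ)
  | infty

/-- Objects of the filtered companion category `FF_Λ R`: the set `Λ`. -/
inductive FF (FR : RingFiltration Γ R) (Λ : Set Γ) : Type u
  | of (α : Λ)

variable (FR : RingFiltration Γ R) (Λ : Set Γ)

namespace OFF

/-- `le X Y` holds iff the canonical morphism `1_{X,Y}` is defined, i.e. `X ≤ Y` in `Λ`,
or `Y = ∞`. -/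
def le : OFF FR Λ → OFF FR Λ → Prop
  | of α, of β => (α : Γ) ≤ (β : Γ)
  | _, infty => True
  | infty, of _ => False

open scoped Classical in
/-- The additive subgroup of `R` of morphisms `X ⟶ Y` in `oFF_Λ R`:
`Hom(α,β) = F_{βα⁻¹}R` for `α ≤ β` in `Λ`, `Hom(X,∞) = R`, and `0` otherwise. -/
noncomputable def homGrp : OFF FR Λ → OFF FR Λ → AddSubgroup R
  | of α, of β => if (α : Γ) ≤ (β : Γ) then FR.F ((β : Γ) * (α : Γ)⁻¹) else ⊥
  | _, infty => ⊤
  | infty, of _ => ⊥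

theorem le_refl' : ∀ X : OFF FR Λ, le FR Λ X X
  | of _ => _root_.le_refl _
  | infty => trivial

theorem one_mem_homGrp : ∀ {X Y : OFF FR Λ}, le FR Λ X Y → (1 : R) ∈ homGrp FR Λ X Y
  | of α, of β, h => by
      have h' : (α : Γ) ≤ (β : Γ) := h
      have h1 : (1 : Γ) ≤ (β : Γ) * (α : Γ)⁻¹ := by
        rw [← mul_inv_cancel (α : Γ)]
        exact mul_le_mul_left h' _
      simpa [homGrp, if_pos h'] using FR.mono h1 FR.one_mem
  | of _, infty, _ => trivial
  | infty, infty, _ => trivial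
  | infty, of _, h => h.elim

theorem mul_mem_homGrp : ∀ {X Y Z : OFF FR Λ} {f g : R},
    f ∈ homGrp FR Λ X Y → g ∈ homGrp FR Λ Y Z → g * f ∈ homGrp FR Λ X Z := by
  intro X Y Z f g hf hg
  cases X <;> cases Y <;> cases Z <;> simp only [homGrp] at hf hg ⊢ <;> try trivial
  case of.of.of a b c =>
    by_cases hab : (a : Γ) ≤ (b : Γ)
    · by_cases hbc : (b : Γ) ≤ (c : Γ)
      · rw [if_pos hab] at hf
        rw [if_pos hbc] at hg
        rw [if_pos (le_trans hab hbc)]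
        have := FR.mul_mem hg hf
        rwa [show (c : Γ) * (b : Γ)⁻¹ * ((b : Γ) * (a : Γ)⁻¹) = (c : Γ) * (a : Γ)⁻¹ by
          group] at this
      · rw [if_neg hbc] at hg
        rw [AddSubgroup.mem_bot] at hg
        subst hg
        simp only [zero_mul]
        exact AddSubgroup.zero_mem _
    · rw [if_neg hab] at hf
      rw [AddSubgroup.mem_bot] at hf
      subst hf
      simp only [mul_zero]
      exact AddSubgroup.zero_mem _
  case of.infty.of a c =>
    rw [AddSubgroup.mem_bot] at hg
    subst hg
    simp only [zero_mul]
    exact AddSubgroup.zero_mem _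
  case infty.of.of b c =>
    rw [AddSubgroup.mem_bot] at hf
    subst hf
    simp only [mul_zero]
    exact AddSubgroup.zero_mem _
  case infty.infty.of c =>
    rw [AddSubgroup.mem_bot] at hg
    subst hg
    simp only [zero_mul]
    exact AddSubgroup.zero_mem _

instance : Category (OFF FR Λ) where
  Hom X Y := homGrp FR Λ X Y
  id X := ⟨1, one_mem_homGrp FR Λ (le_refl' FR Λ X)⟩
  comp f g := ⟨g.1 * f.1, mul_mem_homGrp FR Λ f.2 g.2⟩
  id_comp f := Subtype.ext (mul_one f.1)
  comp_id f := Subtype.ext (one_mul f.1)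
  assoc f g h := Subtype.ext (mul_assoc h.1 g.1 f.1).symm

instance : Preadditive (OFF FR Λ) where
  homGroup X Y := inferInstanceAs (AddCommGroup (homGrp FR Λ X Y))
  add_comp _ _ _ f f' g := Subtype.ext (mul_add g.1 f.1 f'.1)
  comp_add _ _ _ f g g' := Subtype.ext (add_mul g.1 g'.1 f.1)

end OFF

namespace FF

/-- The inclusion of the objects of `FF_Λ R` into those of `oFF_Λ R`. -/
def toOFF : FF FR Λ → OFF FR Λ
  | of α => .of α

instance : Category (FF FR Λ) where
  Hom X Y := OFF.homGrp FR Λ (toOFF FR Λ X) (toOFF FR Λ Y)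
  id X := ⟨1, OFF.one_mem_homGrp FR Λ (OFF.le_refl' FR Λ _)⟩
  comp f g := ⟨g.1 * f.1, OFF.mul_mem_homGrp FR Λ f.2 g.2⟩
  id_comp f := Subtype.ext (mul_one f.1)
  comp_id f := Subtype.ext (one_mul f.1)
  assoc f g h := Subtype.ext (mul_assoc h.1 g.1 f.1).symm

instance : Preadditive (FF FR Λ) where
  homGroup X Y := inferInstanceAs (AddCommGroup (OFF.homGrp FR Λ (toOFF FR Λ X) (toOFF FR Λ Y)))
  add_comp _ _ _ f f' g := Subtype.ext (mul_add g.1 f.1 f'.1)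
  comp_add _ _ _ f g g' := Subtype.ext (add_mul g.1 g'.1 f.1)

end FF

/-- The inclusion functor `j : FF_Λ R ⥤ oFF_Λ R`. -/
def jF : FF FR Λ ⥤ OFF FR Λ where
  obj := FF.toOFF FR Λ
  map f := f
  map_id _ := rfl
  map_comp _ _ := rfl

instance : (jF FR Λ).Additive := ⟨rfl⟩

/-- `Mod C`: the category of additive functors from `C` to abelian groups. -/
abbrev Mod (C : Type u) [Category.{u} C] [Preadditive C] : Type (u + 1) :=
  C ⥤+ AddCommGrpCat.{u}

/-- The component at `X` of a morphism in `Mod C`. -/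
def mapp {C : Type u} [Category.{u} C] [Preadditive C] {M N : Mod C} (f : M ⟶ N) (X : C) :
    M.obj.obj X ⟶ N.obj.obj X :=
  f.hom.app X

/-- The canonical morphism `1_{X,Y}` in `oFF_Λ R`, given by `1_R`. -/
def unitHom (X Y : OFF FR Λ) (h : OFF.le FR Λ X Y) : X ⟶ Y :=
  ⟨1, OFF.one_mem_homGrp FR Λ h⟩

/-- The canonical morphism `1_{α,β}` in `FF_Λ R`, given by `1_R`. -/
def unitHomFF (α β : Λ) (h : (α : Γ) ≤ (β : Γ)) : (FF.of α : FF FR Λ) ⟶ FF.of β :=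
  unitHom FR Λ (.of α) (.of β) h

/-- A module `M` over `oFF_Λ R` is a preglider if all the maps `M(1_{X,Y})` are injective. -/
def IsPreglider (M : Mod (OFF FR Λ)) : Prop :=
  ∀ (X Y : OFF FR Λ) (h : OFF.le FR Λ X Y), Function.Injective (M.obj.map (unitHom FR Λ X Y h))

/-- A module `M` over `FF_Λ R` is a prefragment if all the maps `M(1_{α,β})` are injective. -/
def IsPrefragment (M : Mod (FF FR Λ)) : Prop :=
  ∀ (α β : Λ) (h : (α : Γ) ≤ (β : Γ)), Function.Injective (M.obj.map (unitHomFF FR Λ α β h))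

/-- The category of pregliders: the full subcategory of `Mod (oFF_Λ R)` of pregliders. -/
abbrev Preglid : Type (u + 1) :=
  ObjectProperty.FullSubcategory (fun M : Mod (OFF FR Λ) => IsPreglider FR Λ M)

instance : Preadditive (Preglid FR Λ) := Preadditive.inducedCategory _

/-- The category of prefragments: the full subcategory of `Mod (FF_Λ R)` of prefragments. -/
abbrev Prefrag : Type (u + 1) :=
  ObjectProperty.FullSubcategory (fun M : Mod (FF FR Λ) => IsPrefragment FR Λ M)

instance : Preadditive (Prefrag FR Λ) := Preadditive.inducedCategory _

/-- The inclusion `Preglid FR Λ ⥤ Mod (oFF_Λ R)`. -/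
def iotaF : Preglid FR Λ ⥤ Mod (OFF FR Λ) := ObjectProperty.ι _

/-- The inclusion `Prefrag FR Λ ⥤ Mod (FF_Λ R)`. -/
def etaF : Prefrag FR Λ ⥤ Mod (FF FR Λ) := ObjectProperty.ι _

/-- The component at `X` of a morphism of pregliders. -/
def pgapp {M N : Preglid FR Λ} (f : M ⟶ N) (X : OFF FR Λ) :
    M.obj.obj.obj X ⟶ N.obj.obj.obj X :=
  mapp f.hom X

/-- The component at `X` of a morphism of prefragments. -/
def pfapp {M N : Prefrag FR Λ} (f : M ⟶ N) (X : FF FR Λ) :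
    M.obj.obj.obj X ⟶ N.obj.obj.obj X :=
  mapp f.hom X

/-- The class `Σ` of morphisms of pregliders all of whose components at objects of `Λ`
are isomorphisms. -/
def SigmaClass : MorphismProperty (Preglid FR Λ) :=
  fun _ _ f => ∀ α : Λ, IsIso (pgapp FR Λ f (.of α))

/-- The category of glider representations: the localization of `Preglid FR Λ` at `Σ`. -/
abbrev Glid : Type (u + 1) := (SigmaClass FR Λ).Localization

/-- The localization functor `Q : Preglid FR Λ ⥤ Glid FR Λ`. -/
def QF : Preglid FR Λ ⥤ Glid FR Λ := (SigmaClass FR Λ).Q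

/-- The restriction functor `j^* : Mod (oFF_Λ R) ⥤ Mod (FF_Λ R)`. -/
def jStar : Mod (OFF FR Λ) ⥤ Mod (FF FR Λ) where
  obj M := ⟨jF FR Λ ⋙ M.obj, by
    have : M.obj.Additive := M.property; exact (inferInstance : (jF FR Λ ⋙ M.obj).Additive)⟩
  map {M N} f := InducedCategory.homMk (Functor.whiskerLeft (jF FR Λ) f.hom)
  map_id _ := rfl
  map_comp _ _ := rfl

theorem isPrefragment_jStar (M : Mod (OFF FR Λ)) (hM : IsPreglider FR Λ M) :
    IsPrefragment FR Λ ((jStar FR Λ).obj M) :=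
  fun α β h => hM (.of α) (.of β) h

/-- The restriction functor `j^* : Preglid FR Λ ⥤ Prefrag FR Λ`. -/
def jRes : Preglid FR Λ ⥤ Prefrag FR Λ where
  obj M := ⟨(jStar FR Λ).obj M.obj, isPrefragment_jStar FR Λ M.obj M.property⟩
  map f := InducedCategory.homMk ((jStar FR Λ).map f.hom)
  map_id M := InducedCategory.hom_ext ((jStar FR Λ).map_id M.obj)
  map_comp f g := InducedCategory.hom_ext ((jStar FR Λ).map_comp f.hom g.hom)

theorem sigma_isInvertedBy : (SigmaClass FR Λ).IsInvertedBy (jRes FR Λ) := by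
  intro M N f hf
  haveI : (AdditiveFunctor.forget (FF FR Λ) AddCommGrpCat.{u}).Faithful :=
    ObjectProperty.faithful_ι _
  haveI : ∀ X : FF FR Λ, IsIso
      (((ObjectProperty.ι (fun M : Mod (FF FR Λ) => IsPrefragment FR Λ M) ⋙
        AdditiveFunctor.forget _ _).map ((jRes FR Λ).map f)).app X) := by
    rintro ⟨α⟩
    exact hf α
  haveI : IsIso ((ObjectProperty.ι (fun M : Mod (FF FR Λ) => IsPrefragment FR Λ M) ⋙
      AdditiveFunctor.forget _ _).map ((jRes FR Λ).map f)) :=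
    NatIso.isIso_of_isIso_app _
  exact isIso_of_reflects_iso ((jRes FR Λ).map f)
    (ObjectProperty.ι (fun M : Mod (FF FR Λ) => IsPrefragment FR Λ M) ⋙
      AdditiveFunctor.forget _ _)

/-- The canonical fully faithful functor `φ : Glid FR Λ ⥤ Prefrag FR Λ`,
the unique functor with `Q ⋙ φ = j^*`. -/
def phiF : Glid FR Λ ⥤ Prefrag FR Λ :=
  Localization.Construction.lift (jRes FR Λ) (sigma_isInvertedBy FR Λ)

theorem phiF_fac : QF FR Λ ⋙ phiF FR Λ = jRes FR Λ :=
  Localization.Construction.fac _ _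



section Aux

variable {C : Type u} [Category.{u} C] [Preadditive C]

theorem mapp_nat {M N : Mod C} (f : M ⟶ N) {X Y : C} (u : X ⟶ Y) (x : M.obj.obj X) :
    mapp f Y (M.obj.map u x) = N.obj.map u (mapp f X x) := by
  have h := f.hom.naturality u
  have h2 := congrArg (fun (g : M.obj.obj X ⟶ N.obj.obj Y) => (g : M.obj.obj X → N.obj.obj Y) x) h
  simp only [AddCommGrpCat.comp_apply] at h2
  exact h2

theorem mapp_comp_apply {M N P : Mod C} (f : M ⟶ N) (g : N ⟶ P) (X : C) (x : M.obj.obj X) :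
    mapp (f ≫ g) X x = mapp g X (mapp f X x) := rfl

/-- `r ↦ N.map r x` as an additive hom, the component of the Yoneda-type morphism. -/
def elemHomApp (N : Mod C) {X : C} (x : N.obj.obj X) (Y : C) : (X ⟶ Y) →+ N.obj.obj Y where
  toFun r := N.obj.map r x
  map_zero' := by
    haveI := N.property
    show N.obj.map (0 : X ⟶ Y) x = 0
    rw [Functor.map_zero]; simp
  map_add' r s := by
    haveI := N.property
    show N.obj.map (r + s) x = N.obj.map r x + N.obj.map s x
    rw [Functor.map_add]; simp

theorem elemHomApp_comp (N : Mod C) {X : C} (x : N.obj.obj X) {Y Z : C} (r : X ⟶ Y) (u : Y ⟶ Z) :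
    elemHomApp N x Z (r ≫ u) = N.obj.map u (elemHomApp N x Y r) := by
  simp [elemHomApp, Functor.map_comp, AddCommGrpCat.comp_apply]

/-- The additive coyoneda functor at `X` as an object of `Mod C`. -/
def coyAdd (X : C) : Mod C :=
  ⟨{ obj := fun Y => AddCommGrpCat.of (X ⟶ Y)
     map := fun u => AddCommGrpCat.ofHom
       { toFun := fun r => r ≫ u
         map_zero' := Limits.zero_comp
         map_add' := fun r s => Preadditive.add_comp _ _ _ _ _ _ }
     map_id := by intro Y; ext r; simp
     map_comp := by intro Y Z W u v; ext r; simp },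
   ⟨by intro Y Z u v; ext r; exact Preadditive.comp_add _ _ _ _ _ _⟩⟩

/-- The natural transformation `coyAdd X ⟶ N` corresponding to `x ∈ N(X)`. -/
def elemHom (N : Mod C) {X : C} (x : N.obj.obj X) : coyAdd X ⟶ N :=
  InducedCategory.homMk
  { app := fun Y => AddCommGrpCat.ofHom (elemHomApp N x Y)
    naturality := by
      intro Y Z u
      ext r
      exact elemHomApp_comp N x r u }

theorem mono_component_injective {M N : Mod C} (f : N ⟶ M) (hf : Mono f) (X : C) :
    Function.Injective (mapp f X) := by
  intro x y hxy
  haveI := hf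
  have hcomp : elemHom N x ≫ f = elemHom N y ≫ f := by
    apply InducedCategory.hom_ext
    apply NatTrans.ext
    funext Y
    refine AddCommGrpCat.ext fun (r : X ⟶ Y) => ?_
    show mapp f Y (elemHomApp N x Y r) = mapp f Y (elemHomApp N y Y r)
    show mapp f Y (N.obj.map r x) = mapp f Y (N.obj.map r y)
    rw [mapp_nat, mapp_nat, hxy]
  have h2 := (cancel_mono f).mp hcomp
  have h3 := congrArg (fun (g : coyAdd X ⟶ N) => mapp g X (𝟙 X)) h2
  haveI := N.property
  have h4 : N.obj.map (𝟙 X) x = N.obj.map (𝟙 X) y := h3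
  simpa using h4

theorem inj_of_exact {A B Cc : Mod C} (f : A ⟶ B) (g : B ⟶ Cc)
    (hf : ∀ X, Function.Injective (mapp f X))
    (hex : ∀ X y, mapp g X y = 0 ↔ y ∈ Set.range (mapp f X))
    {X Y : C} (u : X ⟶ Y)
    (hA : Function.Injective (A.obj.map u)) (hC : Function.Injective (Cc.obj.map u)) :
    Function.Injective (B.obj.map u) := by
  have hB0 : ∀ z : B.obj.obj X, B.obj.map u z = 0 → z = 0 := by
    intro z hz
    have h1 : Cc.obj.map u (mapp g X z) = 0 := by
      rw [← mapp_nat g u z, hz, map_zero]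
    have h2 : mapp g X z = 0 := by
      apply hC; rw [h1, map_zero]
    obtain ⟨a, ha⟩ := (hex X z).mp h2
    have h3 : mapp f Y (A.obj.map u a) = 0 := by
      rw [mapp_nat f u a, ha, hz]
    have h4 : A.obj.map u a = 0 := by
      apply hf Y; rw [h3, map_zero]
    have h5 : a = 0 := by apply hA; rw [h4, map_zero]
    rw [← ha, h5, map_zero]
  intro x y hxy
  have : B.obj.map u (x - y) = 0 := by rw [map_sub, hxy, sub_self]
  exact sub_eq_zero.mp (hB0 _ this)

end Aux

section Cover

variable {C : Type u} [Category.{u} C] [Preadditive C]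

attribute [local instance] Classical.decEq

def rightCompHom (X : C) {Y Z : C} (u : Y ⟶ Z) : (X ⟶ Y) →+ (X ⟶ Z) where
  toFun r := r ≫ u
  map_zero' := Limits.zero_comp
  map_add' r s := Preadditive.add_comp _ _ _ _ _ _

def covIdx (M : Mod C) : Type u := Σ X : C, M.obj.obj X

def covObj (M : Mod C) : Mod C :=
  ⟨{ obj := fun Y => AddCommGrpCat.of (Π₀ i : covIdx M, (i.1 ⟶ Y))
     map := fun u => AddCommGrpCat.ofHom
       (DFinsupp.mapRange.addMonoidHom fun i => rightCompHom i.1 u)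
     map_id := by
       intro Y
       refine AddCommGrpCat.ext fun v => DFinsupp.ext fun i => ?_
       simp [AddCommGrpCat.ofHom_apply, DFinsupp.mapRange_apply, rightCompHom]
     map_comp := by
       intro Y Z W uv uw
       refine AddCommGrpCat.ext fun v => DFinsupp.ext fun i => ?_
       simp [AddCommGrpCat.ofHom_apply, DFinsupp.mapRange_apply, rightCompHom,
         AddCommGrpCat.comp_apply] },
   ⟨by
     intro Y Z uv uw
     refine AddCommGrpCat.ext fun v => DFinsupp.ext fun i => ?_
     rw [AddCommGrpCat.hom_add_apply, DFinsupp.add_apply]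
     simp [AddCommGrpCat.ofHom_apply, DFinsupp.mapRange_apply, rightCompHom,
       Preadditive.comp_add]⟩⟩

attribute [local instance] Classical.decEq


def covHom (M : Mod C) : covObj M ⟶ M :=
  InducedCategory.homMk
  { app := fun Y => AddCommGrpCat.ofHom (DFinsupp.sumAddHom fun i : covIdx M => elemHomApp M i.2 Y)
    naturality := by
      intro Y Z u
      refine AddCommGrpCat.ext fun v => ?_
      show (DFinsupp.sumAddHom fun i : covIdx M => elemHomApp M i.2 Z)
          (DFinsupp.mapRange.addMonoidHom (fun i : covIdx M => rightCompHom i.1 u) v) =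
        M.obj.map u ((DFinsupp.sumAddHom fun i : covIdx M => elemHomApp M i.2 Y) v)
      classical
      induction v using DFinsupp.induction with
      | h0 => simp
      | ha i r w _ _ ih =>
          rw [map_add, map_add, map_add, map_add, ih]
          congr 1
          rw [DFinsupp.mapRange.addMonoidHom_apply, DFinsupp.mapRange_single,
            DFinsupp.sumAddHom_single, DFinsupp.sumAddHom_single]
          exact elemHomApp_comp M i.2 r u }

theorem covHom_surjective (M : Mod C) (Y : C) : Function.Surjective (mapp (covHom M) Y) := by
  classical
  intro y
  refine ⟨DFinsupp.single (⟨Y, y⟩ : covIdx M) (𝟙 Y), ?_⟩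
  have h1 : mapp (covHom M) Y (DFinsupp.single (⟨Y, y⟩ : covIdx M) (𝟙 Y)) =
      (DFinsupp.sumAddHom fun i : covIdx M => elemHomApp M i.2 Y)
        (DFinsupp.single (⟨Y, y⟩ : covIdx M) (𝟙 Y)) := rfl
  rw [h1]
  refine (DFinsupp.sumAddHom_single (fun i : covIdx M => elemHomApp M i.2 Y)
    (⟨Y, y⟩ : covIdx M) (𝟙 Y)).trans ?_
  have h2 : elemHomApp M y Y (𝟙 Y) = M.obj.map (𝟙 Y) y := rfl
  rw [h2, CategoryTheory.Functor.map_id]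
  rfl

theorem covObj_map_injective (M : Mod C) {Y Z : C} (u : Y ⟶ Z)
    (hu : ∀ X : C, Function.Injective fun r : X ⟶ Y => r ≫ u) :
    Function.Injective ((covObj M).obj.map u) := by
  intro v w hvw
  refine DFinsupp.ext fun i => ?_
  have h := congrArg (fun d : Π₀ i : covIdx M, (i.1 ⟶ Z) => d i) hvw
  exact hu i.1 h

end Cover

section Tors

variable {C : Type u} [Category.{u} C] [Preadditive C]

/-- A morphism of `AddCommGrp` as an additive monoid hom. -/
def toHom {A B : AddCommGrpCat.{u}} (f : A ⟶ B) : A →+ B := f.hom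

theorem toHom_apply {A B : AddCommGrpCat.{u}} (f : A ⟶ B) (x : A) : toHom f x = f x := rfl

variable (Un : ∀ X Y : C, Set (X ⟶ Y))

/-- The predicate on modules: all maps indexed by `Un` act injectively. -/
def PredOf (P : Mod C) : Prop :=
  ∀ ⦃X Y : C⦄ (u : X ⟶ Y), u ∈ Un X Y → Function.Injective (P.obj.map u)

/-- The torsion subgroup at `X`: elements killed by every map into a `PredOf` module. -/
def torsK (M : Mod C) (X : C) : AddSubgroup (M.obj.obj X) where
  carrier := {x | ∀ (P : Mod C), PredOf Un P → ∀ φ : M ⟶ P, mapp φ X x = 0}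
  zero_mem' := fun P _ φ => (toHom (mapp φ X)).map_zero
  add_mem' := fun {a b} ha hb P hP φ => by
    rw [show mapp φ X (a + b) = mapp φ X a + mapp φ X b from (toHom (mapp φ X)).map_add a b,
      ha P hP φ, hb P hP φ, add_zero]
  neg_mem' := fun {a} ha P hP φ => by
    rw [show mapp φ X (-a) = -(mapp φ X a) from (toHom (mapp φ X)).map_neg a,
      ha P hP φ, neg_zero]

theorem torsK_map {M : Mod C} {X Y : C} (u : X ⟶ Y) {x : M.obj.obj X}
    (hx : x ∈ torsK Un M X) : M.obj.map u x ∈ torsK Un M Y := by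
  intro P hP φ
  rw [mapp_nat φ u x, hx P hP φ,
    show P.obj.map u (0 : P.obj.obj X) = 0 from (toHom (P.obj.map u)).map_zero]

theorem torsK_comap {M : Mod C} {X Y : C} (u : X ⟶ Y) :
    torsK Un M X ≤ (torsK Un M Y).comap (toHom (M.obj.map u)) :=
  fun _ hx => torsK_map Un u hx

theorem torsK_preimage {M : Mod C} {X Y : C} {u : X ⟶ Y} (hu : u ∈ Un X Y) {x : M.obj.obj X}
    (hx : M.obj.map u x ∈ torsK Un M Y) : x ∈ torsK Un M X := by
  intro P hP φ
  apply hP u hu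
  rw [← mapp_nat φ u x, hx P hP φ,
    show P.obj.map u (0 : P.obj.obj X) = 0 from (toHom (P.obj.map u)).map_zero]

/-- The torsion-free quotient of `M`. -/
def torsQ (M : Mod C) : Mod C :=
  ⟨{ obj := fun X => AddCommGrpCat.of (M.obj.obj X ⧸ torsK Un M X)
     map := fun {X Y} u => AddCommGrpCat.ofHom
       (QuotientAddGroup.map _ _ (toHom (M.obj.map u)) (torsK_comap Un u))
     map_id := by
       intro X
       refine AddCommGrpCat.ext fun q => ?_
       induction q using QuotientAddGroup.induction_on with
       | H x =>
         show (QuotientAddGroup.map _ _ (toHom (M.obj.map (𝟙 X))) (torsK_comap Un (𝟙 X)))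
             ((x : M.obj.obj X ⧸ torsK Un M X)) = ((x : M.obj.obj X ⧸ torsK Un M X))
         rw [QuotientAddGroup.map_mk]
         rw [show toHom (M.obj.map (𝟙 X)) x = x by
           rw [toHom, CategoryTheory.Functor.map_id]; rfl]
     map_comp := by
       intro X Y Z u v
       refine AddCommGrpCat.ext fun q => ?_
       induction q using QuotientAddGroup.induction_on with
       | H x =>
         show (QuotientAddGroup.map _ _ (toHom (M.obj.map (u ≫ v))) (torsK_comap Un (u ≫ v)))
             ((x : M.obj.obj X ⧸ torsK Un M X))
           = (QuotientAddGroup.map _ _ (toHom (M.obj.map v)) (torsK_comap Un v))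
             ((QuotientAddGroup.map _ _ (toHom (M.obj.map u)) (torsK_comap Un u))
               ((x : M.obj.obj X ⧸ torsK Un M X)))
         rw [QuotientAddGroup.map_mk, QuotientAddGroup.map_mk, QuotientAddGroup.map_mk]
         rw [show toHom (M.obj.map (u ≫ v)) x = toHom (M.obj.map v) (toHom (M.obj.map u) x) by
           rw [toHom, toHom, toHom, CategoryTheory.Functor.map_comp]; rfl] },
   ⟨by
     intro X Y u v
     haveI := M.property
     refine AddCommGrpCat.ext fun q => ?_
     induction q using QuotientAddGroup.induction_on with
     | H x =>
       show (QuotientAddGroup.map _ _ (toHom (M.obj.map (u + v))) (torsK_comap Un (u + v)))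
           ((x : M.obj.obj X ⧸ torsK Un M X))
         = (QuotientAddGroup.map _ _ (toHom (M.obj.map u)) (torsK_comap Un u))
             ((x : M.obj.obj X ⧸ torsK Un M X))
           + (QuotientAddGroup.map _ _ (toHom (M.obj.map v)) (torsK_comap Un v))
             ((x : M.obj.obj X ⧸ torsK Un M X))
       rw [QuotientAddGroup.map_mk, QuotientAddGroup.map_mk, QuotientAddGroup.map_mk]
       rw [show toHom (M.obj.map (u + v)) x = toHom (M.obj.map u) x + toHom (M.obj.map v) x by
         rw [toHom, toHom, toHom, Functor.map_add]; rfl]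
       rfl⟩⟩

theorem torsQ_map_mk (M : Mod C) {X Y : C} (u : X ⟶ Y) (x : M.obj.obj X) :
    (torsQ Un M).obj.map u ((x : M.obj.obj X ⧸ torsK Un M X))
      = ((M.obj.map u x : M.obj.obj Y) : M.obj.obj Y ⧸ torsK Un M Y) :=
  QuotientAddGroup.map_mk _ _ (toHom (M.obj.map u)) (torsK_comap Un u) x

theorem torsQ_pred (M : Mod C) : PredOf Un (torsQ Un M) := by
  intro X Y u hu a b hab
  induction a using QuotientAddGroup.induction_on with
  | H x =>
    induction b using QuotientAddGroup.induction_on with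
    | H y =>
      rw [torsQ_map_mk, torsQ_map_mk] at hab
      replace hab : ((M.obj.map u x : M.obj.obj Y) : M.obj.obj Y ⧸ torsK Un M Y)
          = ((M.obj.map u y : M.obj.obj Y) : M.obj.obj Y ⧸ torsK Un M Y) := hab
      rw [QuotientAddGroup.eq] at hab
      show ((x : M.obj.obj X ⧸ torsK Un M X)) = ((y : M.obj.obj X ⧸ torsK Un M X))
      rw [QuotientAddGroup.eq]
      apply torsK_preimage Un hu
      rw [show M.obj.map u (-x + y) = -(M.obj.map u x) + M.obj.map u y from by
        show toHom (M.obj.map u) (-x + y)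
          = -(toHom (M.obj.map u) x) + toHom (M.obj.map u) y
        rw [map_add, map_neg]]
      exact hab

/-- The quotient map `M ⟶ torsQ M`. -/
def torsPi (M : Mod C) : M ⟶ torsQ Un M :=
  InducedCategory.homMk
  { app := fun X => AddCommGrpCat.ofHom (QuotientAddGroup.mk' (torsK Un M X))
    naturality := by
      intro X Y u
      refine AddCommGrpCat.ext fun x => ?_
      show ((torsQ Un M).obj.map u) ((x : M.obj.obj X ⧸ torsK Un M X))
        = ((M.obj.map u x : M.obj.obj Y) : M.obj.obj Y ⧸ torsK Un M Y)
      exact torsQ_map_mk Un M u x }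

variable (pred : Mod C → Prop) (hiff : ∀ P : Mod C, pred P ↔ PredOf Un P)

theorem torsK_le_ker {M : Mod C} {P : Mod C} (hP : PredOf Un P) (φ : M ⟶ P) (X : C) :
    torsK Un M X ≤ (toHom (mapp φ X)).ker :=
  fun x hx => hx P hP φ

theorem torsK_mapped {M N : Mod C} (φ : M ⟶ N) (X : C) :
    torsK Un M X ≤ (torsK Un N X).comap (toHom (mapp φ X)) := by
  intro x hx P hP ψ
  have h := hx P hP (φ ≫ ψ)
  rw [mapp_comp_apply] at h
  exact h

/-- The torsion-free reflection functor. -/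
def torsFunctor : Mod C ⥤ ObjectProperty.FullSubcategory pred where
  obj M := ⟨torsQ Un M, (hiff _).mpr (torsQ_pred Un M)⟩
  map {M N} φ := InducedCategory.homMk <| InducedCategory.homMk
    { app := fun X => AddCommGrpCat.ofHom (QuotientAddGroup.map _ _
        (toHom (mapp φ X)) (torsK_mapped Un φ X))
      naturality := by
        intro X Y u
        refine AddCommGrpCat.ext fun q => ?_
        induction q using QuotientAddGroup.induction_on with
        | H x =>
          show (QuotientAddGroup.map _ _ (toHom (mapp φ Y)) (torsK_mapped Un φ Y))
              (((torsQ Un M).obj.map u) ((x : M.obj.obj X ⧸ torsK Un M X)))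
            = ((torsQ Un N).obj.map u)
              ((QuotientAddGroup.map _ _ (toHom (mapp φ X)) (torsK_mapped Un φ X))
                ((x : M.obj.obj X ⧸ torsK Un M X)))
          rw [torsQ_map_mk, QuotientAddGroup.map_mk, QuotientAddGroup.map_mk, torsQ_map_mk]
          rw [show toHom (mapp φ Y) (M.obj.map u x) = mapp φ Y (M.obj.map u x) from rfl,
            mapp_nat φ u x]
          rfl }
  map_id M := by
    apply InducedCategory.hom_ext
    apply InducedCategory.hom_ext
    apply NatTrans.ext
    funext X
    refine AddCommGrpCat.ext fun q => ?_
    induction q using QuotientAddGroup.induction_on with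
    | H x =>
      show (QuotientAddGroup.map _ _ (toHom (mapp (𝟙 M) X)) (torsK_mapped Un (𝟙 M) X))
          ((x : M.obj.obj X ⧸ torsK Un M X)) = ((x : M.obj.obj X ⧸ torsK Un M X))
      rw [QuotientAddGroup.map_mk]
      rfl
  map_comp {M N P} φ ψ := by
    apply InducedCategory.hom_ext
    apply InducedCategory.hom_ext
    apply NatTrans.ext
    funext X
    refine AddCommGrpCat.ext fun q => ?_
    induction q using QuotientAddGroup.induction_on with
    | H x =>
      show (QuotientAddGroup.map _ _ (toHom (mapp (φ ≫ ψ) X)) (torsK_mapped Un (φ ≫ ψ) X))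
          ((x : M.obj.obj X ⧸ torsK Un M X))
        = (QuotientAddGroup.map _ _ (toHom (mapp ψ X)) (torsK_mapped Un ψ X))
          ((QuotientAddGroup.map _ _ (toHom (mapp φ X)) (torsK_mapped Un φ X))
            ((x : M.obj.obj X ⧸ torsK Un M X)))
      rw [QuotientAddGroup.map_mk, QuotientAddGroup.map_mk, QuotientAddGroup.map_mk]
      rfl

/-- The adjunction between the reflection and the inclusion. -/
def torsAdj : torsFunctor Un pred hiff ⊣ ObjectProperty.ι pred :=
  Adjunction.mkOfHomEquiv
    { homEquiv := fun M P =>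
        { toFun := fun ψ => torsPi Un M ≫ ψ.hom
          invFun := fun φ => InducedCategory.homMk <| InducedCategory.homMk
            { app := fun X => AddCommGrpCat.ofHom (QuotientAddGroup.lift _
                (toHom (mapp φ X))
                (torsK_le_ker Un ((hiff _).mp P.property) φ X))
              naturality := by
                intro X Y u
                refine AddCommGrpCat.ext fun q => ?_
                induction q using QuotientAddGroup.induction_on with
                | H x =>
                  show (QuotientAddGroup.lift _ (toHom (mapp φ Y))
                        (torsK_le_ker Un ((hiff _).mp P.property) φ Y))
                      (((torsQ Un M).obj.map u) ((x : M.obj.obj X ⧸ torsK Un M X)))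
                    = P.obj.obj.map u ((QuotientAddGroup.lift _ (toHom (mapp φ X))
                        (torsK_le_ker Un ((hiff _).mp P.property) φ X))
                      ((x : M.obj.obj X ⧸ torsK Un M X)))
                  rw [torsQ_map_mk, QuotientAddGroup.lift_mk', QuotientAddGroup.lift_mk']
                  exact mapp_nat φ u x }
          left_inv := by
            intro ψ
            apply InducedCategory.hom_ext
            apply InducedCategory.hom_ext
            apply NatTrans.ext
            funext X
            refine AddCommGrpCat.ext fun q => ?_
            induction q using QuotientAddGroup.induction_on with
            | H x => rfl
          right_inv := by
            intro φ
            apply InducedCategory.hom_ext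
            apply NatTrans.ext
            funext X
            rfl }
      homEquiv_naturality_left_symm := by
        intro M' M P f g
        apply InducedCategory.hom_ext
        apply InducedCategory.hom_ext
        apply NatTrans.ext
        funext X
        refine AddCommGrpCat.ext fun q => ?_
        induction q using QuotientAddGroup.induction_on with
        | H x => rfl
      homEquiv_naturality_right := by
        intro M P P' f g
        rfl }

end Tors

section Concrete


/-- The unit morphisms of `oFF`. -/
def UnO : ∀ X Y : OFF FR Λ, Set (X ⟶ Y) :=
  fun X Y => {u | ∃ h : OFF.le FR Λ X Y, u = unitHom FR Λ X Y h}

theorem predOf_UnO (P : Mod (OFF FR Λ)) : IsPreglider FR Λ P ↔ PredOf (UnO FR Λ) P := by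
  constructor
  · rintro hP X Y u ⟨h, rfl⟩
    exact hP X Y h
  · intro hP X Y h
    exact hP (unitHom FR Λ X Y h) ⟨h, rfl⟩

/-- The unit morphisms of `FF`. -/
def UnF : ∀ X Y : FF FR Λ, Set (X ⟶ Y) :=
  fun X Y =>
    match X, Y with
    | .of α, .of β => {u | ∃ h : (α : Γ) ≤ (β : Γ), u = unitHomFF FR Λ α β h}

theorem predOf_UnF (P : Mod (FF FR Λ)) : IsPrefragment FR Λ P ↔ PredOf (UnF FR Λ) P := by
  constructor
  · rintro hP ⟨α⟩ ⟨β⟩ u ⟨h, rfl⟩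
    exact hP α β h
  · intro hP α β h
    exact hP (unitHomFF FR Λ α β h) ⟨h, rfl⟩

theorem comp_unitHom_injective (X Y : OFF FR Λ) (h : OFF.le FR Λ X Y) (Z : OFF FR Λ) :
    Function.Injective fun r : Z ⟶ X => r ≫ unitHom FR Λ X Y h := by
  intro r s hrs
  have h2 : (1 : R) * r.1 = 1 * s.1 := congrArg Subtype.val hrs
  rw [one_mul, one_mul] at h2
  exact Subtype.ext h2

theorem comp_unitHomFF_injective (α β : Λ) (h : (α : Γ) ≤ (β : Γ)) (Z : FF FR Λ) :
    Function.Injective fun r : Z ⟶ FF.of α => r ≫ unitHomFF FR Λ α β h := by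
  intro r s hrs
  have h2 : (1 : R) * r.1 = 1 * s.1 := congrArg Subtype.val hrs
  rw [one_mul, one_mul] at h2
  exact Subtype.ext h2

theorem covObj_isPreglider (M : Mod (OFF FR Λ)) : IsPreglider FR Λ (covObj M) :=
  fun X Y h => covObj_map_injective M (unitHom FR Λ X Y h)
    (fun Z => comp_unitHom_injective FR Λ X Y h Z)

theorem covObj_isPrefragment (M : Mod (FF FR Λ)) : IsPrefragment FR Λ (covObj M) :=
  fun α β h => covObj_map_injective M (unitHomFF FR Λ α β h)
    (fun Z => comp_unitHomFF_injective FR Λ α β h Z)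

end Concrete
section Statements

variable {Γ : Type u} [Group Γ] [PartialOrder Γ]
  [CovariantClass Γ Γ (· * ·) (· ≤ ·)] [CovariantClass Γ Γ (Function.swap (· * ·)) (· ≤ ·)]
  {R : Type u} [Ring R]

/-- `Preglid FR` is a cotilting torsion-free class in `Mod oFF_Λ R`, and
`Prefrag FR` is a cotilting torsion-free class in `Mod FF_Λ R`: each is closed under
subobjects and under extensions (stated via componentwise short exact sequences, which
agree with short exact sequences in these functor categories), the inclusion functor
admits a left adjoint, and every object of the ambient module category admits an
epimorphism (componentwise surjection) from an object of the subcategory. -/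
theorem statement_3 (FR : RingFiltration Γ R) (Λ : Set Γ) :
    -- `Preglid FR` is a cotilting torsion-free class in `Mod (oFF_Λ R)`:
    ((∀ (M N : Mod (OFF FR Λ)) (f : N ⟶ M), Mono f →
        IsPreglider FR Λ M → IsPreglider FR Λ N) ∧
     (∀ (A B C : Mod (OFF FR Λ)) (f : A ⟶ B) (g : B ⟶ C),
        (∀ X, Function.Injective (mapp f X)) →
        (∀ X, Function.Surjective (mapp g X)) →
        (∀ X (y : B.obj.obj X), mapp g X y = 0 ↔ y ∈ Set.range (mapp f X)) →
        IsPreglider FR Λ A → IsPreglider FR Λ C → IsPreglider FR Λ B) ∧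
     (∃ κ : Mod (OFF FR Λ) ⥤ Preglid FR Λ, Nonempty (κ ⊣ iotaF FR Λ)) ∧
     (∀ M : Mod (OFF FR Λ), ∃ (P : Preglid FR Λ) (p : (iotaF FR Λ).obj P ⟶ M),
        ∀ X, Function.Surjective (mapp p X))) ∧
    -- `Prefrag FR` is a cotilting torsion-free class in `Mod (FF_Λ R)`:
    ((∀ (M N : Mod (FF FR Λ)) (f : N ⟶ M), Mono f →
        IsPrefragment FR Λ M → IsPrefragment FR Λ N) ∧
     (∀ (A B C : Mod (FF FR Λ)) (f : A ⟶ B) (g : B ⟶ C),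
        (∀ X, Function.Injective (mapp f X)) →
        (∀ X, Function.Surjective (mapp g X)) →
        (∀ X (y : B.obj.obj X), mapp g X y = 0 ↔ y ∈ Set.range (mapp f X)) →
        IsPrefragment FR Λ A → IsPrefragment FR Λ C → IsPrefragment FR Λ B) ∧
     (∃ θ : Mod (FF FR Λ) ⥤ Prefrag FR Λ, Nonempty (θ ⊣ etaF FR Λ)) ∧
     (∀ M : Mod (FF FR Λ), ∃ (P : Prefrag FR Λ) (p : (etaF FR Λ).obj P ⟶ M),
        ∀ X, Function.Surjective (mapp p X))) := by

  constructor
  · refine ⟨?_, ?_, ?_, ?_⟩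
    · intro M N f hm hM X Y h x y hxy
      apply mono_component_injective f hm X
      apply hM X Y h
      rw [← mapp_nat f _ x, ← mapp_nat f _ y, hxy]
    · intro A B Cc f g hinj hsurj hex hA hC X Y h
      exact inj_of_exact f g hinj hex (unitHom FR Λ X Y h) (hA X Y h) (hC X Y h)
    · exact ⟨torsFunctor (UnO FR Λ) (fun M => IsPreglider FR Λ M) (predOf_UnO FR Λ),
        ⟨torsAdj (UnO FR Λ) (fun M => IsPreglider FR Λ M) (predOf_UnO FR Λ)⟩⟩
    · intro M
      exact ⟨⟨covObj M, covObj_isPreglider FR Λ M⟩, covHom M,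
        fun X => covHom_surjective M X⟩
  · refine ⟨?_, ?_, ?_, ?_⟩
    · intro M N f hm hM α β h x y hxy
      apply mono_component_injective f hm (FF.of α)
      apply hM α β h
      rw [← mapp_nat f _ x, ← mapp_nat f _ y, hxy]
    · intro A B Cc f g hinj hsurj hex hA hC α β h
      exact inj_of_exact f g hinj hex (unitHomFF FR Λ α β h) (hA α β h) (hC α β h)
    · exact ⟨torsFunctor (UnF FR Λ) (fun M => IsPrefragment FR Λ M) (predOf_UnF FR Λ),
        ⟨torsAdj (UnF FR Λ) (fun M => IsPrefragment FR Λ M) (predOf_UnF FR Λ)⟩⟩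
    · intro M
      exact ⟨⟨covObj M, covObj_isPrefragment FR Λ M⟩, covHom M,
        fun X => covHom_surjective M X⟩


end Statements

end GliderPaper
end
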